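/- The function M is differentiable at 0 and (1/μ)·M′(0) equals: (Bρ³ + (3B+1)ρ² + (3B+4)ρ + B + 2) / (μρ(1+ρ)(ρB + B + 1)) if ρ = β, and (β^{B+2}(1+ρ)³ − ρ^{B+2}((β²+β)(ρ+2) + 1 + ρ)) / (μ(1+ρ)(β^{B+2}(ρ²+ρ) − ρ^{B+2}(β²+β))) if ρ ≠ β. -/

import Mathlib

/-- First moment of AoI for LCFS-PS (EH only when system is empty), from the MGF. -/
theorem stmt_10 (rho beta mu : ℝ) (hrho : 0 < rho) (hbeta : 0 < beta) (hmu : 0 < mu)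
    (B : ℕ) (hB : 1 ≤ B)
    (theta pi1 : ℝ)
    (htheta : theta = if rho = beta then (B : ℝ)
      else beta * (beta ^ B - rho ^ B) / (rho ^ B * (beta - rho)))
    (hpi1 : pi1 = if rho = beta then 1 / (1 + (B : ℝ) * (1 + rho))
      else rho ^ B * (beta - rho) /
        (rho ^ B * (beta - rho) + beta * (1 + rho) * (beta ^ B - rho ^ B)))
    (M : ℝ → ℝ)
    (hM : ∀ x, M x = rho * (1 + rho) * pi1 * (x ^ 2 * theta - x * theta * (1 + rho + beta)
        + beta * (1 + theta + theta * rho))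
      / ((1 - x) * (rho - x) * (1 + rho - x) * (beta - x))) :
    DifferentiableAt ℝ M 0 ∧
    (1 / mu) * deriv M 0 =
      if rho = beta then
        ((B : ℝ) * rho ^ 3 + (3 * (B : ℝ) + 1) * rho ^ 2 + (3 * (B : ℝ) + 4) * rho + (B : ℝ) + 2)
          / (mu * rho * (1 + rho) * (rho * (B : ℝ) + (B : ℝ) + 1))
      else
        (beta ^ (B + 2) * (1 + rho) ^ 3
            - rho ^ (B + 2) * ((beta ^ 2 + beta) * (rho + 2) + 1 + rho))
          / (mu * (1 + rho) * (beta ^ (B + 2) * (rho ^ 2 + rho)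
            - rho ^ (B + 2) * (beta ^ 2 + beta))) := by
  have hMf : M = fun x => rho * (1 + rho) * pi1 * (x ^ 2 * theta - x * theta * (1 + rho + beta)
        + beta * (1 + theta + theta * rho))
      / ((1 - x) * (rho - x) * (1 + rho - x) * (beta - x)) := funext hM
  subst hMf
  have h1r : (0:ℝ) < 1 + rho := by linarith
  have hden0 : ((1:ℝ) - 0) * (rho - 0) * (1 + rho - 0) * (beta - 0) ≠ 0 := by
    simp only [sub_zero]
    positivity
  have hnum : HasDerivAt
      (fun x : ℝ => rho * (1 + rho) * pi1 * (x ^ 2 * theta - x * theta * (1 + rho + beta)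
        + beta * (1 + theta + theta * rho)))
      (rho * (1 + rho) * pi1 * (((2:ℕ) * 0 ^ (2-1)) * theta - 1 * theta * (1 + rho + beta))) 0 := by
    exact ((((hasDerivAt_pow 2 (0:ℝ)).mul_const theta).sub
      (((hasDerivAt_id (0:ℝ)).mul_const theta).mul_const (1 + rho + beta))).add_const
      (beta * (1 + theta + theta * rho))).const_mul (rho * (1 + rho) * pi1)
  have hd1 : HasDerivAt (fun x : ℝ => 1 - x) (-1) 0 := by
    simpa using (hasDerivAt_id (0:ℝ)).const_sub 1
  have hd2 : HasDerivAt (fun x : ℝ => rho - x) (-1) 0 := by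
    simpa using (hasDerivAt_id (0:ℝ)).const_sub rho
  have hd3 : HasDerivAt (fun x : ℝ => 1 + rho - x) (-1) 0 := by
    simpa using (hasDerivAt_id (0:ℝ)).const_sub (1 + rho)
  have hd4 : HasDerivAt (fun x : ℝ => beta - x) (-1) 0 := by
    simpa using (hasDerivAt_id (0:ℝ)).const_sub beta
  have hden : HasDerivAt (fun x : ℝ => (1 - x) * (rho - x) * (1 + rho - x) * (beta - x))
      ((((-1) * (rho - 0) + (1 - 0) * (-1)) * (1 + rho - 0)
        + (1 - 0) * (rho - 0) * (-1)) * (beta - 0)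
        + (1 - 0) * (rho - 0) * (1 + rho - 0) * (-1)) 0 :=
    ((hd1.mul hd2).mul hd3).mul hd4
  have hMd := hnum.div hden hden0
  refine ⟨hMd.differentiableAt, ?_⟩
  erw [hMd.deriv]
  subst htheta hpi1
  by_cases h : rho = beta
  · subst h
    rw [if_pos rfl, if_pos rfl, if_pos rfl]
    have hBpos : (0:ℝ) < 1 + (B:ℝ) * (1 + rho) := by positivity
    have hB2 : (0:ℝ) < rho * (B:ℝ) + (B:ℝ) + 1 := by
      have : (1:ℝ) ≤ (B:ℝ) := by exact_mod_cast hB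
      nlinarith
    have hr0 : rho ≠ 0 := hrho.ne'
    have h1r0 : 1 + rho ≠ 0 := h1r.ne'
    simp only [sub_zero, one_mul, mul_one]
    norm_num
    field_simp
    ring
  · rw [if_neg h, if_neg h, if_neg h]
    have hbr : beta - rho ≠ 0 := sub_ne_zero.mpr (Ne.symm h)
    have hrB : rho ^ B ≠ 0 := pow_ne_zero _ hrho.ne'
    -- geometric sums
    have hgs : (∑ i ∈ Finset.range B, beta ^ i * rho ^ (B - 1 - i)) * (beta - rho)
        = beta ^ B - rho ^ B := geom_sum₂_mul beta rho B
    have hgs1 : (∑ i ∈ Finset.range (B+1), beta ^ i * rho ^ (B + 1 - 1 - i)) * (beta - rho)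
        = beta ^ (B+1) - rho ^ (B+1) := geom_sum₂_mul beta rho (B+1)
    have hSpos : 0 < ∑ i ∈ Finset.range B, beta ^ i * rho ^ (B - 1 - i) := by
      apply Finset.sum_pos
      · intro i _
        positivity
      · exact Finset.nonempty_range_iff.mpr (by omega)
    have hS1pos : 0 < ∑ i ∈ Finset.range (B+1), beta ^ i * rho ^ (B + 1 - 1 - i) := by
      apply Finset.sum_pos
      · intro i _
        positivity
      · exact Finset.nonempty_range_iff.mpr (by omega)
    set S := ∑ i ∈ Finset.range B, beta ^ i * rho ^ (B - 1 - i) with hS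
    set S1 := ∑ i ∈ Finset.range (B+1), beta ^ i * rho ^ (B + 1 - 1 - i) with hS1
    have hA : rho ^ B * (beta - rho) + beta * (1 + rho) * (beta ^ B - rho ^ B) ≠ 0 := by
      rw [← hgs]
      have heq : rho ^ B * (beta - rho) + beta * (1 + rho) * (S * (beta - rho))
          = (beta - rho) * (rho ^ B + beta * (1 + rho) * S) := by ring
      rw [heq]
      exact mul_ne_zero hbr (add_pos (pow_pos hrho B) (mul_pos (mul_pos hbeta h1r) hSpos)).ne'
    have hD : beta ^ (B + 2) * (rho ^ 2 + rho) - rho ^ (B + 2) * (beta ^ 2 + beta) ≠ 0 := by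
      have heq : beta ^ (B + 2) * (rho ^ 2 + rho) - rho ^ (B + 2) * (beta ^ 2 + beta)
          = rho * beta * ((beta ^ (B+1) - rho ^ (B+1)) + rho * beta * (beta ^ B - rho ^ B)) := by
        ring
      rw [heq, ← hgs, ← hgs1]
      have heq2 : S1 * (beta - rho) + rho * beta * (S * (beta - rho))
          = (beta - rho) * (S1 + rho * beta * S) := by ring
      rw [heq2]
      exact mul_ne_zero (by positivity) (mul_ne_zero hbr (add_pos hS1pos (mul_pos (mul_pos hrho hbeta) hSpos)).ne')
    rw [pow_add, pow_add] at hD ⊢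
    simp only [sub_zero, one_mul, mul_one]
    norm_num
    generalize beta ^ B = Q at *
    generalize rho ^ B = P at *
    have hr0 : rho ≠ 0 := hrho.ne'
    have hb0 : beta ≠ 0 := hbeta.ne'
    have h1r0 : 1 + rho ≠ 0 := h1r.ne'
    field_simp
    ring
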